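/- arXiv:0906.4868 — 7 statements merged into one kernel-verified Lean document; each statement's English description precedes it below -/
import Mathlib

section
/- Let p be a prime. Then p is not in the image of Z_p; that is, there is no natural number m such that the base-p expansion of m! ends with exactly p zeroes. -/
/-- `Z b n` is the number of trailing zeroes of the base-`b` expansion of `n!`,
i.e. the largest `k` such that `b ^ k ∣ n!`. -/
def Z (b n : ℕ) : ℕ := padicValNat b (Nat.factorial n)

theorem prime_not_mem_image_Z (p : ℕ) (hp : p.Prime) :
    ¬ ∃ m : ℕ, Z p m = p := by
  haveI : Fact p.Prime := ⟨hp⟩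
  rintro ⟨m, hm⟩
  have hfac : (Nat.factorial m) ≠ 0 := (Nat.factorial_pos m).ne'
  have key : ∀ r, p ^ r ∣ Nat.factorial m ↔ r ≤ Z p m := fun r => by
    rw [Z]; exact padicValNat_dvd_iff_le hfac
  have hp1 : 1 < p := hp.one_lt
  rcases lt_or_ge m (p ^ 2) with h | h
  · have hdvd : p ^ Z p m ∣ Nat.factorial m := (key _).2 le_rfl
    have hlog : Nat.log p m < 2 := by
      rcases Nat.eq_zero_or_pos m with rfl | hm0
      · simp
      · exact Nat.log_lt_of_lt_pow hm0.ne' h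
    rw [Nat.Prime.pow_dvd_factorial_iff hp hlog] at hdvd
    have hsum : ∑ i ∈ Finset.Ico 1 2, m / p ^ i = m / p := by simp
    rw [hsum] at hdvd
    have : m / p < p := Nat.div_lt_of_lt_mul (by rw [← sq]; exact h)
    omega
  · have hlog2 : 2 ≤ Nat.log p m :=
      (Nat.le_log_iff_pow_le hp1 (lt_of_lt_of_le (pow_pos hp.pos 2) h).ne').2 h
    have hdvd : p ^ (p + 1) ∣ Nat.factorial m := by
      rw [Nat.Prime.pow_dvd_factorial_iff hp (Nat.lt_succ_self (Nat.log p m))]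
      have hsub : ({1, 2} : Finset ℕ) ⊆ Finset.Ico 1 (Nat.log p m + 1) := by
        intro i hi
        simp only [Finset.mem_insert, Finset.mem_singleton] at hi
        rcases hi with rfl | rfl <;> rw [Finset.mem_Ico] <;> omega
      calc p + 1 ≤ m / p ^ 1 + m / p ^ 2 := by
            have h1 : p ≤ m / p ^ 1 := by
              rw [Nat.le_div_iff_mul_le (by positivity)]
              calc p * p ^ 1 = p ^ 2 := by ring
              _ ≤ m := h
            have h2 : 1 ≤ m / p ^ 2 := Nat.one_le_div_iff (by positivity) |>.2 h
            omega
        _ = ∑ i ∈ ({1, 2} : Finset ℕ), m / p ^ i := by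
            rw [Finset.sum_insert (by simp), Finset.sum_singleton]
        _ ≤ ∑ i ∈ Finset.Ico 1 (Nat.log p m + 1), m / p ^ i :=
            Finset.sum_le_sum_of_subset hsub
    have := (key _).1 hdvd
    omega
end

section
/- Let p be a prime and let n > 1 and k be integers with 1 ≤ k < n. Then (p^n - kp + k - 1)/(p-1) is not in the image of Z_p. (Equivalently, (p^n - 1)/(p-1) - k is not in the image of Z_p.) -/
lemma Z_mono (p : ℕ) [Fact p.Prime] {a b : ℕ} (h : a ≤ b) : Z p a ≤ Z p b := by
  rw [Z, Z, ← padicValNat_dvd_iff_le (Nat.factorial_ne_zero b)]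
  exact dvd_trans (pow_padicValNat_dvd) (Nat.factorial_dvd_factorial h)

lemma sum_digits_pow_sub_one (p : ℕ) (hp : 1 < p) (n : ℕ) :
    (p.digits (p ^ n - 1)).sum = n * (p - 1) := by
  induction n with
  | zero => simp
  | succ n ih =>
    have h1 : p ^ (n + 1) - 1 ≠ 0 := by
      have : 1 < p ^ (n + 1) := Nat.one_lt_pow (Nat.succ_ne_zero n) hp
      omega
    rw [Nat.digits_def' hp (Nat.pos_of_ne_zero h1)]
    have hpos : 0 < p := by omega
    have hone : 1 ≤ p ^ n := Nat.one_le_pow _ _ hpos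
    have key : p ^ (n + 1) - 1 = p * (p ^ n - 1) + (p - 1) := by
      have e1 : p * (p ^ n - 1) = p * p ^ n - p * 1 := Nat.mul_sub p _ _
      have e2 : p ^ (n + 1) = p * p ^ n := by rw [pow_succ]; ring
      have e3 : p ≤ p * p ^ n := Nat.le_mul_of_pos_right p hone
      omega
    have hd : (p ^ (n + 1) - 1) / p = p ^ n - 1 := by
      rw [key, Nat.mul_add_div hpos, Nat.div_eq_of_lt (by omega), add_zero]
    have hm : (p ^ (n + 1) - 1) % p = p - 1 := by
      rw [key, Nat.mul_add_mod, Nat.mod_eq_of_lt (by omega)]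
    rw [List.sum_cons, hd, hm, ih]
    ring

lemma sum_digits_pow (p : ℕ) (hp : 1 < p) (n : ℕ) :
    (p.digits (p ^ n)).sum = 1 := by
  induction n with
  | zero =>
    rw [pow_zero, Nat.digits_def' hp one_pos, Nat.mod_eq_of_lt hp,
      Nat.div_eq_of_lt hp]
    simp
  | succ n ih =>
    have hpos : 0 < p ^ (n + 1) := Nat.pow_pos (by omega)
    rw [Nat.digits_def' hp hpos]
    have hd : p ^ (n + 1) / p = p ^ n := by
      rw [pow_succ, Nat.mul_div_cancel _ (by omega)]
    have hm : p ^ (n + 1) % p = 0 := by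
      rw [pow_succ, Nat.mul_mod_left]
    rw [List.sum_cons, hd, hm, ih]

theorem family_a_not_in_image (p n k : ℕ) (hp : p.Prime) (hn : 1 < n)
    (hk1 : 1 ≤ k) (hkn : k < n) :
    (p ^ n - 1) / (p - 1) - k ∉ Set.range (Z p) := by
  haveI : Fact p.Prime := ⟨hp⟩
  have hp1 : 1 < p := hp.one_lt
  set T := (p ^ n - 1) / (p - 1) with hT
  have hdvd : (p - 1) ∣ p ^ n - 1 := by
    simpa using Nat.sub_dvd_pow_sub_pow p 1 n
  have hTmul : (p - 1) * T = p ^ n - 1 := Nat.mul_div_cancel' hdvd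
  -- p^n - 1 ≥ n * (p - 1)
  have hbern : ∀ m : ℕ, m * (p - 1) ≤ p ^ m - 1 := by
    intro m
    induction m with
    | zero => simp
    | succ m ih =>
      have h1 : 1 ≤ p ^ m := Nat.one_le_pow _ _ (by omega)
      have h3 : p ^ (m + 1) = p * p ^ m := by rw [pow_succ]; ring
      have h4 : (p - 1) * 1 ≤ (p - 1) * p ^ m := Nat.mul_le_mul_left _ h1
      have h5 : (p - 1) * p ^ m = p * p ^ m - 1 * p ^ m := Nat.sub_mul _ _ _
      calc (m + 1) * (p - 1) = m * (p - 1) + (p - 1) := by ring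
        _ ≤ p ^ m - 1 + (p - 1) := by omega
        _ ≤ p ^ (m + 1) - 1 := by omega
  have hnT : n ≤ T := by
    have h : (p - 1) * n ≤ (p - 1) * T :=
      calc (p - 1) * n = n * (p - 1) := mul_comm _ _
        _ ≤ p ^ n - 1 := hbern n
        _ = (p - 1) * T := hTmul.symm
    exact Nat.le_of_mul_le_mul_left h (by omega)
  -- Z p (p ^ n) = T
  have hZtop : Z p (p ^ n) = T := by
    have h := sub_one_mul_padicValNat_factorial (p := p) (p ^ n)
    rw [sum_digits_pow p hp1] at h
    have : (p - 1) * Z p (p ^ n) = (p - 1) * T := by rw [Z, h, hTmul]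
    exact Nat.eq_of_mul_eq_mul_left (by omega) this
  -- Z p (p ^ n - 1) = T - n
  have hZbot : Z p (p ^ n - 1) = T - n := by
    have h := sub_one_mul_padicValNat_factorial (p := p) (p ^ n - 1)
    rw [sum_digits_pow_sub_one p hp1] at h
    have h1 : 1 ≤ p ^ n := Nat.one_le_pow _ _ (by omega)
    have h2 : p ^ n - 1 - (p ^ n - 1 - n * (p - 1)) = n * (p - 1) := by
      have := hbern n; omega
    have hmn : (p - 1) * n = n * (p - 1) := mul_comm _ _
    have : (p - 1) * Z p (p ^ n - 1) = (p - 1) * (T - n) := by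
      rw [Z, h, Nat.mul_sub (p - 1) T n, hTmul, hmn]
    exact Nat.eq_of_mul_eq_mul_left (by omega) this
  rintro ⟨m, hm⟩
  rcases le_or_gt (p ^ n) m with hcase | hcase
  · have := Z_mono p hcase
    rw [hZtop, hm] at this
    omega
  · have hle : m ≤ p ^ n - 1 := by omega
    have := Z_mono p hle
    rw [hZbot, hm] at this
    omega
end

section
/- Let p be a prime, r ≥ 2 an integer, and n a natural number; write Z_p(n) = αr + β with 0 ≤ β < r (i.e. β = Z_p(n) mod r). Then Z_{p^r}(n+1) = Z_{p^r}(n) if and only if n+1 = p^m · a with a coprime to p and 0 ≤ m < r - β, i.e. if and only if the p-adic valuation m of n+1 satisfies m + β < r. -/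
lemma padicValNat_prime_pow_eq (p r N : ℕ) (hp : p.Prime) (hr : 0 < r) (hN : N ≠ 0) :
    padicValNat (p ^ r) N = padicValNat p N / r := by
  haveI : Fact p.Prime := ⟨hp⟩
  set v := padicValNat p N with hv
  have h1 : (p ^ r) ^ (v / r) ∣ N := by
    rw [← pow_mul]
    have hle : r * (v / r) ≤ v := by
      have := Nat.div_add_mod v r; omega
    exact dvd_trans (pow_dvd_pow p hle) pow_padicValNat_dvd
  have h2 : ¬ (p ^ r) ^ (v / r + 1) ∣ N := by
    rw [← pow_mul]
    intro h
    have h2 := (padicValNat_dvd_iff_le hN).mp h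
    have h3 : v < r * (v / r + 1) := Nat.lt_mul_div_succ v hr
    omega
  have hb : p ^ r ≠ 1 := by
    have := hp.one_lt
    exact Nat.ne_of_gt (Nat.one_lt_pow (by omega) this)
  rw [padicValNat_def' hb hN]
  exact multiplicity_eq_of_dvd_of_not_dvd h1 h2

lemma div_add_eq_div_iff (v m r : ℕ) (hr : 0 < r) :
    (v + m) / r = v / r ↔ m + v % r < r := by
  obtain ⟨q, b, hb, rfl⟩ : ∃ q b, b < r ∧ v = r * q + b :=
    ⟨v / r, v % r, Nat.mod_lt v hr, (Nat.div_add_mod v r).symm⟩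
  rw [add_assoc, Nat.mul_add_div hr, Nat.mul_add_div hr, Nat.div_eq_of_lt hb,
    Nat.mul_add_mod, Nat.mod_eq_of_lt hb]
  constructor
  · intro h
    by_contra hcon
    have h1 : 1 ≤ (b + m) / r := (Nat.one_le_div_iff hr).mpr (by omega)
    omega
  · intro h
    rw [Nat.div_eq_of_lt (by omega)]

theorem Z_prime_pow_no_jump (p r n : ℕ) (hp : p.Prime) (hr : 2 ≤ r) :
    Z (p ^ r) (n + 1) = Z (p ^ r) n ↔
      ∃ m a, Nat.Coprime p a ∧ n + 1 = p ^ m * a ∧ m + Z p n % r < r := by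
  haveI : Fact p.Prime := ⟨hp⟩
  have hrpos : 0 < r := by omega
  set v := Z p n with hv
  set m0 := padicValNat p (n + 1) with hm0
  have hfac : Z p (n + 1) = v + m0 := by
    unfold v m0
    unfold Z
    rw [Nat.factorial_succ, padicValNat.mul (Nat.succ_ne_zero n) (Nat.factorial_ne_zero n)]
    ring
  have key : Z (p ^ r) (n + 1) = Z (p ^ r) n ↔ m0 + v % r < r := by
    unfold Z
    rw [padicValNat_prime_pow_eq p r _ hp hrpos (Nat.factorial_ne_zero _),
        padicValNat_prime_pow_eq p r _ hp hrpos (Nat.factorial_ne_zero _),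
        show padicValNat p (Nat.factorial (n+1)) = v + m0 from hfac]
    show (v + m0) / r = v / r ↔ m0 + v % r < r
    exact div_add_eq_div_iff v m0 r hrpos
  rw [key]
  constructor
  · intro h
    refine ⟨m0, (n + 1) / p ^ m0, ?_, ?_, by omega⟩
    · rw [Nat.Prime.coprime_iff_not_dvd hp]
      intro hdvd
      have : p ^ (m0 + 1) ∣ n + 1 := by
        have h1 : p ^ m0 ∣ n + 1 := pow_padicValNat_dvd
        obtain ⟨c, hc⟩ := hdvd
        refine ⟨c, ?_⟩
        rw [pow_succ, mul_assoc, ← hc, Nat.mul_div_cancel' h1]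
      exact pow_succ_padicValNat_not_dvd (Nat.succ_ne_zero n) this
    · rw [Nat.mul_div_cancel' pow_padicValNat_dvd]
  · rintro ⟨m, a, hcop, heq, hlt⟩
    have ha : padicValNat p a = 0 := by
      rw [padicValNat.eq_zero_iff]
      right; right
      exact (Nat.Prime.coprime_iff_not_dvd hp).mp hcop
    have : m0 = m := by
      have ha2 : a ≠ 0 := by rintro rfl; simp at heq
      rw [hm0, heq, padicValNat.mul (pow_ne_zero _ hp.ne_zero) ha2,
        padicValNat.prime_pow, ha, Nat.add_zero]
    omega
end

section
/- Let p be a prime, r ≥ 2 an integer, n a natural number, and k a natural number; write Z_p(n) = αr + β with 0 ≤ β < r (i.e. β = Z_p(n) mod r). Then Z_{p^r}(n+1) - Z_{p^r}(n) = k if and only if n+1 = p^m · a with a coprime to p and kr ≤ m + β < (k+1)r, i.e. if and only if the p-adic valuation m of n+1 satisfies kr ≤ m + β < (k+1)r. -/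
private lemma le_padicValNat_iff' {b x : ℕ} (hb : 1 < b) (hx : x ≠ 0) (n : ℕ) :
    n ≤ padicValNat b x ↔ b ^ n ∣ x := by
  rw [padicValNat_def' hb.ne' hx]
  exact ((Nat.finiteMultiplicity_iff.2 ⟨hb.ne',
    Nat.pos_of_ne_zero hx⟩).pow_dvd_iff_le_multiplicity).symm

private lemma padicValNat_pow_base {p r x : ℕ} (hp : p.Prime) (hr : 1 ≤ r) (hx : x ≠ 0) :
    padicValNat (p ^ r) x = padicValNat p x / r := by
  have hr0 : 0 < r := hr
  have hb : 1 < p ^ r := Nat.one_lt_pow hr0.ne' hp.one_lt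
  apply Nat.le_antisymm
  · rw [Nat.le_div_iff_mul_le hr0]
    rw [le_padicValNat_iff' hp.one_lt hx, mul_comm, pow_mul]
    exact (le_padicValNat_iff' hb hx _).mp le_rfl
  · rw [le_padicValNat_iff' hb hx, ← pow_mul]
    refine dvd_trans (pow_dvd_pow p ?_) ((le_padicValNat_iff' hp.one_lt hx _).mp le_rfl)
    rw [Nat.mul_comm]
    exact Nat.div_mul_le_self _ _

theorem Z_prime_pow_jump_amplitude (p r n k : ℕ) (hp : p.Prime) (hr : 2 ≤ r) :
    Z (p ^ r) (n + 1) - Z (p ^ r) n = k ↔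
      ∃ m a, Nat.Coprime p a ∧ n + 1 = p ^ m * a ∧
        k * r ≤ m + Z p n % r ∧ m + Z p n % r < (k + 1) * r := by
  haveI : Fact p.Prime := ⟨hp⟩
  have hr0 : 0 < r := by omega
  have hn1 : (n : ℕ) + 1 ≠ 0 := n.succ_ne_zero
  have hfac : Nat.factorial n ≠ 0 := n.factorial_ne_zero
  have hfac1 : Nat.factorial (n + 1) ≠ 0 := (n + 1).factorial_ne_zero
  set v : ℕ := padicValNat p (Nat.factorial n) with hv
  set M : ℕ := padicValNat p (n + 1) with hM
  have hZp : Z p n = v := rfl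
  have hsucc : padicValNat p (Nat.factorial (n + 1)) = M + v := by
    rw [Nat.factorial_succ, padicValNat.mul hn1 hfac]
  have hZr : Z (p ^ r) n = v / r := padicValNat_pow_base hp hr0 hfac
  have hZr1 : Z (p ^ r) (n + 1) = (M + v) / r := by
    show padicValNat (p ^ r) (Nat.factorial (n + 1)) = _
    rw [padicValNat_pow_base hp hr0 hfac1, hsucc]
  have hsplit : (M + v) / r = v / r + (M + v % r) / r := by
    conv_lhs => rw [← Nat.div_add_mod v r, ← Nat.add_assoc, Nat.add_comm M (r * (v / r)),
      Nat.add_assoc]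
    rw [Nat.mul_add_div hr0]
  have hdiff : Z (p ^ r) (n + 1) - Z (p ^ r) n = (M + v % r) / r := by
    rw [hZr1, hZr, hsplit]; exact Nat.add_sub_cancel_left _ _
  rw [hdiff, hZp]
  constructor
  · rintro rfl
    refine ⟨M, (n + 1) / p ^ M, ?_, ?_, Nat.div_mul_le_self _ _, ?_⟩
    · rw [hp.coprime_iff_not_dvd, hM, ← Nat.factorization_def _ hp]
      exact Nat.not_dvd_ordCompl hp hn1
    · rw [hM, ← Nat.factorization_def _ hp]
      exact (Nat.ordProj_mul_ordCompl_eq_self (n + 1) p).symm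
    · rw [← Nat.div_lt_iff_lt_mul hr0]
      exact Nat.lt_succ_self _
  · rintro ⟨m, a, hcop, heq, h1, h2⟩
    have ha0 : a ≠ 0 := by
      rintro rfl; simp at heq
    have hMm : M = m := by
      rw [hM, heq, padicValNat.mul (pow_ne_zero _ hp.pos.ne') ha0,
        padicValNat.prime_pow, padicValNat.eq_zero_of_not_dvd
          (hp.coprime_iff_not_dvd.mp hcop), Nat.add_zero]
    subst hMm
    exact Nat.div_eq_of_lt_le h1 h2
end

section
/- Let p be a prime and r ≥ 2 an integer such that r divides S := Σ_{i=1}^{kr} p^{kr-i} = (p^{kr} - 1)/(p - 1) for some integer k > 1. Then for every integer h with 1 ≤ h < k, the number S/r - h is not in the image of Z_{p^r}. -/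
lemma my_padicValNat_pow_base {p r N : ℕ} (hp : p.Prime) (hr : 0 < r) (hN : N ≠ 0) :
    padicValNat (p ^ r) N = padicValNat p N / r := by
  haveI : Fact p.Prime := ⟨hp⟩
  have hb : p ^ r ≠ 1 := (Nat.one_lt_pow hr.ne' hp.one_lt).ne'
  set v := padicValNat p N with hv
  rw [padicValNat_def' hb hN]
  apply multiplicity_eq_of_dvd_of_not_dvd
  · rw [← pow_mul]
    exact (padicValNat_dvd_iff_le hN).2 (by rw [mul_comm]; exact Nat.div_mul_le_self v r)
  · rw [← pow_mul]
    intro hdvd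
    have h1 := (padicValNat_dvd_iff_le hN).1 hdvd
    have h2 := Nat.div_add_mod v r
    have h3 := Nat.mod_lt v hr
    set q := v / r
    rw [Nat.mul_add, Nat.mul_one] at h1
    omega

theorem family_not_in_image_prime_pow (p r k h : ℕ) (hp : p.Prime) (hr : 2 ≤ r)
    (hk : 1 < k) (hdvd : r ∣ (p ^ (k * r) - 1) / (p - 1))
    (hh1 : 1 ≤ h) (hhk : h < k) :
    ((p ^ (k * r) - 1) / (p - 1)) / r - h ∉ Set.range (Z (p ^ r)) := by
  haveI : Fact p.Prime := ⟨hp⟩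
  set M := k * r with hM
  set S := (p ^ M - 1) / (p - 1) with hS
  have hp1 : 1 < p := hp.one_lt
  have hr0 : 0 < r := by omega
  have hM0 : 0 < M := by positivity
  -- geometric sum
  have hgeom : ∑ i ∈ Finset.range M, p ^ i = S := Nat.geomSum_eq hp.two_le M
  have hSM : M ≤ S := by
    rw [← hgeom]
    calc M = ∑ _i ∈ Finset.range M, 1 := by simp
    _ ≤ ∑ i ∈ Finset.range M, p ^ i :=
      Finset.sum_le_sum fun i _ => Nat.one_le_pow _ _ hp.pos
  -- Legendre value at p^M
  have hA : padicValNat p (Nat.factorial (p ^ M)) = S := by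
    rw [padicValNat_factorial (b := M + 1)
      (by rw [Nat.log_pow hp1]; omega)]
    rw [Finset.sum_Ico_eq_sum_range]
    simp only [Nat.add_sub_cancel]
    calc ∑ i ∈ Finset.range M, p ^ M / p ^ (1 + i)
        = ∑ i ∈ Finset.range M, p ^ (M - 1 - i) := by
          refine Finset.sum_congr rfl fun i hi => ?_
          rw [Nat.pow_div (by simp at hi; omega) hp.pos]
          congr 1
          simp at hi; omega
      _ = ∑ i ∈ Finset.range M, p ^ i := Finset.sum_range_reflect (fun j => p ^ j) M
      _ = S := hgeom
  -- Legendre value at p^M - 1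
  have hdivh : ∀ i < M, (p ^ M - 1) / p ^ (1 + i) = p ^ (M - 1 - i) - 1 := by
    intro i hi
    have hab : p ^ M = p ^ (M - 1 - i) * p ^ (1 + i) := by
      rw [← pow_add]; congr 1; omega
    have ha : 1 ≤ p ^ (M - 1 - i) := Nat.one_le_pow _ _ hp.pos
    have hb : 1 ≤ p ^ (1 + i) := Nat.one_le_pow _ _ hp.pos
    rw [hab]
    set a := p ^ (M - 1 - i)
    set b := p ^ (1 + i)
    have key : a * b - 1 = (b - 1) + (a - 1) * b := by
      have : (a - 1) * b = a * b - b := by rw [Nat.sub_mul, one_mul]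
      have hba : b ≤ a * b := Nat.le_mul_of_pos_left _ ha
      omega
    rw [key, Nat.add_mul_div_right _ _ (by omega : 0 < b),
      Nat.div_eq_of_lt (by omega), zero_add]
  have hB : padicValNat p (Nat.factorial (p ^ M - 1)) = S - M := by
    rw [padicValNat_factorial (b := M + 1)
      (by
        have : Nat.log p (p ^ M - 1) ≤ Nat.log p (p ^ M) :=
          Nat.log_mono_right (by omega)
        rw [Nat.log_pow hp1] at this; omega)]
    rw [Finset.sum_Ico_eq_sum_range]
    simp only [Nat.add_sub_cancel]
    have e1 : ∑ i ∈ Finset.range M, (p ^ M - 1) / p ^ (1 + i)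
        = ∑ i ∈ Finset.range M, (p ^ (M - 1 - i) - 1) := by
      refine Finset.sum_congr rfl fun i hi => ?_
      exact hdivh i (Finset.mem_range.mp hi)
    rw [e1]
    have e2 : ∑ i ∈ Finset.range M, ((p ^ (M - 1 - i) - 1) + 1)
        = ∑ i ∈ Finset.range M, p ^ (M - 1 - i) := by
      refine Finset.sum_congr rfl fun i hi => ?_
      exact Nat.sub_add_cancel (Nat.one_le_pow _ _ hp.pos)
    rw [Finset.sum_add_distrib] at e2
    simp only [Finset.sum_const, Finset.card_range, smul_eq_mul, mul_one] at e2
    have e3 : ∑ i ∈ Finset.range M, p ^ (M - 1 - i) = S :=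
      (Finset.sum_range_reflect (fun j => p ^ j) M).trans hgeom
    omega
  -- main argument
  rintro ⟨n, hn⟩
  unfold Z at hn
  rw [my_padicValNat_pow_base hp hr0 (Nat.factorial_ne_zero n)] at hn
  set v := padicValNat p (Nat.factorial n) with hv
  -- S / r ≥ k
  have hSr : k ≤ S / r := (Nat.le_div_iff_mul_le hr0).2 hSM
  set m := S / r - h with hm
  set c := h * r with hc
  -- r * m = S - r * h
  have hmr : m * r = S - c := by
    rw [hm, hc, Nat.sub_mul, Nat.div_mul_cancel hdvd]
  have hhrM : c + r ≤ M := by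
    calc c + r = (h + 1) * r := by rw [hc]; ring
    _ ≤ k * r := Nat.mul_le_mul_right r (by omega)
  have hrc : r ≤ c := by rw [hc]; exact Nat.le_mul_of_pos_left r (by omega)
  set mr := m * r with hmr'
  clear_value S m c mr v M
  -- bounds from hn : v / r = m
  have hb1 : mr ≤ v := by rw [hmr', ← hn]; exact Nat.div_mul_le_self v r
  have hb2 : v < mr + r := by
    have h3 : v % r < r := Nat.mod_lt v hr0
    calc v = r * (v / r) + v % r := (Nat.div_add_mod v r).symm
      _ = r * m + v % r := by rw [hn]
      _ < r * m + r := Nat.add_lt_add_left h3 _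
      _ = mr + r := by rw [hmr', Nat.mul_comm]
  -- monotonicity of padicValNat of factorial
  have hmono : ∀ a b : ℕ, a ≤ b →
      padicValNat p (Nat.factorial a) ≤ padicValNat p (Nat.factorial b) := by
    intro a b hab
    exact (padicValNat_dvd_iff_le (Nat.factorial_ne_zero b)).1
      (dvd_trans pow_padicValNat_dvd (Nat.factorial_dvd_factorial hab))
  rcases lt_or_ge n (p ^ M) with hcase | hcase
  · have hle : v ≤ S - M := by
      rw [hv, ← hB]; exact hmono n (p ^ M - 1) (by omega)
    omega
  · have hge : S ≤ v := by
      rw [hv, ← hA]; exact hmono (p ^ M) n hcase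
    omega
end

section
/- Let p be an odd prime and k > 1 an integer. Then for every integer h with 1 ≤ h < k, the number (1/2) · Σ_{i=1}^{2k} p^{2k-i} - h = (p^{2k} - 1)/(2(p-1)) - h is not in the image of Z_{p^2}. -/
lemma not_pow_succ_padicValNat_dvd {b m : ℕ} (hb : 1 < b) (hm : 0 < m) :
    ¬ b ^ (padicValNat b m + 1) ∣ m := by
  have hfin : FiniteMultiplicity b m := Nat.finiteMultiplicity_iff.2 ⟨hb.ne', hm⟩
  rw [padicValNat_def' hb.ne' hm.ne']
  exact hfin.not_pow_dvd_of_multiplicity_lt (by omega)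

lemma geom_sum_succ_aux (p : ℕ) (hp : 1 ≤ p) :
    ∀ m : ℕ, (p - 1) * (∑ j ∈ Finset.range m, p ^ j) + 1 = p ^ m := by
  intro m
  induction m with
  | zero => simp
  | succ m ih =>
    rw [Finset.sum_range_succ, Nat.mul_add, pow_succ]
    have hpm : 1 ≤ p ^ m := Nat.one_le_pow _ _ hp
    have h1 : (p - 1) * p ^ m + p ^ m = p ^ m * p := by
      cases' Nat.exists_eq_add_of_le hp with q hq
      have h2 : 1 + q - 1 = q := by omega
      subst hq
      rw [h2]; ring
    omega

theorem family_not_in_image_prime_sq (p k h : ℕ) (hp : p.Prime) (hodd : Odd p)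
    (hk : 1 < k) (hh1 : 1 ≤ h) (hhk : h < k) :
    (p ^ (2 * k) - 1) / (2 * (p - 1)) - h ∉ Set.range (Z (p ^ 2)) := by
  haveI : Fact p.Prime := ⟨hp⟩
  have hp2 : 2 ≤ p := hp.two_le
  obtain ⟨S, hS⟩ : ∃ S : ℕ, ∑ j ∈ Finset.range (2 * k), p ^ j = S := ⟨_, rfl⟩
  have hgeom : (p - 1) * S + 1 = p ^ (2 * k) := hS ▸ geom_sum_succ_aux p (by omega) (2 * k)
  -- S is even
  have hSeven : S % 2 = 0 := by
    rw [← hS]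
    rw [Finset.sum_nat_mod]
    have hc : ∀ j ∈ Finset.range (2 * k), p ^ j % 2 = 1 := fun j _ => Nat.odd_iff.mp hodd.pow
    rw [Finset.sum_congr rfl hc, Finset.sum_const, Finset.card_range, smul_eq_mul, mul_one]
    omega
  -- S ≥ 2k
  have hSge : 2 * k ≤ S := by
    rw [← hS]
    calc 2 * k = ∑ _j ∈ Finset.range (2 * k), 1 := by
          rw [Finset.sum_const, Finset.card_range, smul_eq_mul, mul_one]
      _ ≤ _ := Finset.sum_le_sum fun j _ => Nat.one_le_pow _ _ (by omega)
  -- the target value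
  have hT : (p ^ (2 * k) - 1) / (2 * (p - 1)) = S / 2 := by
    have h1 : p ^ (2 * k) - 1 = (p - 1) * S := by omega
    rw [h1, mul_comm 2 (p - 1), Nat.mul_div_mul_left _ _ (show 0 < p - 1 by omega)]
  rw [hT]
  obtain ⟨T, hTdef⟩ : ∃ T : ℕ, S / 2 - h = T := ⟨_, rfl⟩
  rw [hTdef]
  have h2T : 2 * T = S - 2 * h := by omega
  -- value of padicValNat p ((p^(2k))!)
  have hvpk : padicValNat p (Nat.factorial (p ^ (2 * k))) = S := by
    have hlog : Nat.log p (p ^ (2 * k)) < 2 * k + 1 := by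
      rw [Nat.log_pow (by omega)]; omega
    rw [padicValNat_factorial hlog, ← hS]
    calc ∑ i ∈ Finset.Ico 1 (2 * k + 1), p ^ (2 * k) / p ^ i
        = ∑ i ∈ Finset.Ico 1 (2 * k + 1), p ^ (2 * k - i) :=
          Finset.sum_congr rfl fun i hi => by
            simp only [Finset.mem_Ico] at hi
            rw [Nat.pow_div (by omega) (by omega)]
      _ = ∑ i ∈ Finset.range (2 * k + 1 - 1), p ^ (2 * k - (1 + i)) :=
          Finset.sum_Ico_eq_sum_range (fun i => p ^ (2 * k - i)) 1 (2 * k + 1)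
      _ = ∑ i ∈ Finset.range (2 * k), p ^ (2 * k - 1 - i) :=
          Finset.sum_congr (by norm_num) fun i _ => by congr 1; omega
      _ = ∑ j ∈ Finset.range (2 * k), p ^ j :=
          Finset.sum_range_reflect (fun j => p ^ j) (2 * k)
  -- value at p^(2k) - 1
  have hfac : Nat.factorial (p ^ (2 * k)) = p ^ (2 * k) * Nat.factorial (p ^ (2 * k) - 1) := by
    have h1 : 1 ≤ p ^ (2 * k) := Nat.one_le_pow _ _ (by omega)
    have h2 : p ^ (2 * k) = (p ^ (2 * k) - 1) + 1 := by omega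
    rw [h2, Nat.factorial_succ]
    congr 1 <;> omega
  have hvpk1 : padicValNat p (Nat.factorial (p ^ (2 * k) - 1)) = S - 2 * k := by
    have hne1 : p ^ (2 * k) ≠ 0 := pow_ne_zero _ (by omega)
    have hne2 : Nat.factorial (p ^ (2 * k) - 1) ≠ 0 := Nat.factorial_ne_zero _
    have hv2 := hvpk
    rw [hfac, padicValNat.mul hne1 hne2, padicValNat.prime_pow] at hv2
    omega
  -- main argument
  rintro ⟨n, hn⟩
  unfold Z at hn
  have hfn : Nat.factorial n ≠ 0 := Nat.factorial_ne_zero _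
  have hdvd : (p ^ 2) ^ T ∣ Nat.factorial n := hn ▸ pow_padicValNat_dvd
  have hndvd : ¬ (p ^ 2) ^ (T + 1) ∣ Nat.factorial n := by
    rw [← hn]
    exact not_pow_succ_padicValNat_dvd
      (Nat.one_lt_pow (by omega) (by omega)) (Nat.pos_of_ne_zero hfn)
  rw [← pow_mul] at hdvd hndvd
  obtain ⟨v, hv⟩ : ∃ v : ℕ, padicValNat p (Nat.factorial n) = v := ⟨_, rfl⟩
  have hvlow : 2 * T ≤ v := by
    rw [← hv, ← padicValNat_dvd_iff_le hfn]
    exact hdvd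
  have hvhigh : v < 2 * T + 2 := by
    by_contra hcon
    push_neg at hcon
    exact hndvd (dvd_trans (pow_dvd_pow p (show 2 * (T + 1) ≤ v by omega))
      (hv ▸ pow_padicValNat_dvd))
  rcases le_or_gt (p ^ (2 * k)) n with hcase | hcase
  · have hSv : S ≤ v := by
      rw [← hvpk, ← hv, ← padicValNat_dvd_iff_le hfn]
      exact dvd_trans pow_padicValNat_dvd (Nat.factorial_dvd_factorial hcase)
    omega
  · have hle : n ≤ p ^ (2 * k) - 1 := by omega
    have hSv : v ≤ S - 2 * k := by
      rw [← hvpk1, ← hv, ← padicValNat_dvd_iff_le (Nat.factorial_ne_zero _)]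
      exact dvd_trans pow_padicValNat_dvd (Nat.factorial_dvd_factorial hle)
    omega
end

section
/- Let q be an odd prime. Then q divides 2^{q(q-1)} - 1, and for every integer h with 1 ≤ h < q - 1, the number (2^{q(q-1)} - 1)/q - h is not in the image of Z_{2^q}. -/
open Nat

private lemma sum_digits_two_pow (k : ℕ) : (Nat.digits 2 (2 ^ k)).sum = 1 := by
  induction k with
  | zero => simp
  | succ k ih =>
    have h1 : 2 ^ (k + 1) % 2 = 0 := by simp [pow_succ]
    have h2 : 2 ^ (k + 1) / 2 = 2 ^ k := by simp [pow_succ]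
    rw [Nat.digits_def' one_lt_two (pow_pos two_pos _), h1, h2, List.sum_cons, ih]

private lemma sum_digits_two_pow_sub_one (k : ℕ) :
    (Nat.digits 2 (2 ^ k - 1)).sum = k := by
  induction k with
  | zero => simp
  | succ k ih =>
    have hpow : 2 ^ (k + 1) = 2 * 2 ^ k := by ring
    have hk1 : 1 ≤ 2 ^ k := Nat.one_le_two_pow
    have hpos : 0 < 2 ^ (k + 1) - 1 := by omega
    have h1 : (2 ^ (k + 1) - 1) % 2 = 1 := by omega
    have h2 : (2 ^ (k + 1) - 1) / 2 = 2 ^ k - 1 := by omega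
    rw [Nat.digits_def' one_lt_two hpos, h1, h2, List.sum_cons, ih]
    omega

private lemma v2_factorial (m : ℕ) :
    padicValNat 2 (m !) = m - (Nat.digits 2 m).sum := by
  have := sub_one_mul_padicValNat_factorial (p := 2) m
  simpa using this

private lemma v2_factorial_mono {a b : ℕ} (hab : a ≤ b) :
    padicValNat 2 (a !) ≤ padicValNat 2 (b !) :=
  (padicValNat_dvd_iff_le b.factorial_ne_zero).mp
    (pow_padicValNat_dvd.trans (Nat.factorial_dvd_factorial hab))

theorem family_not_in_image_two_pow (q : ℕ) (hq : q.Prime) (hodd : Odd q) :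
    q ∣ 2 ^ (q * (q - 1)) - 1 ∧
    ∀ h : ℕ, 1 ≤ h → h < q - 1 →
      (2 ^ (q * (q - 1)) - 1) / q - h ∉ Set.range (Z (2 ^ q)) := by
  haveI : Fact q.Prime := ⟨hq⟩
  set k := q * (q - 1) with hk
  have hq2 : q ≠ 2 := by
    rintro rfl
    rw [Nat.odd_iff] at hodd
    omega
  have hq3 : 3 ≤ q := by have := hq.two_le; omega
  -- Fermat's little theorem part
  have h2ne : (2 : ZMod q) ≠ 0 := by
    have : ¬ ((2 : ℕ) : ZMod q) = 0 := by
      rw [ZMod.natCast_eq_zero_iff]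
      intro hdvd
      have := Nat.le_of_dvd (by norm_num) hdvd
      omega
    simpa using this
  have hfermat : (2 : ZMod q) ^ (q - 1) = 1 := ZMod.pow_card_sub_one_eq_one h2ne
  have h1le : (1 : ℕ) ≤ 2 ^ k := Nat.one_le_two_pow
  have hdvd : q ∣ 2 ^ k - 1 := by
    have hcast : ((2 ^ k - 1 : ℕ) : ZMod q) = 0 := by
      rw [Nat.cast_sub h1le]
      push_cast
      rw [hk, mul_comm, pow_mul, hfermat, one_pow, sub_self]
    exact (ZMod.natCast_eq_zero_iff _ _).mp hcast
  refine ⟨hdvd, ?_⟩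
  obtain ⟨N, hN⟩ : ∃ N, 2 ^ k - 1 = q * N := hdvd
  have hdivN : (2 ^ k - 1) / q = N := by
    rw [hN, Nat.mul_div_cancel_left _ hq.pos]
  -- k < 2 ^ k, so k ≤ q * N
  have hk_lt : k < 2 ^ k := Nat.lt_two_pow_self
  have hkN : k ≤ q * N := by omega
  -- q - 1 ≤ N
  have hq1N : q - 1 ≤ N := by
    have : q * (q - 1) ≤ q * N := by omega
    exact Nat.le_of_mul_le_mul_left this hq.pos
  intro h h1 h2 hmem
  obtain ⟨n, hn⟩ := hmem
  rw [hdivN] at hn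
  -- basic facts about Z (2^q) n
  have hb1 : (2 : ℕ) ^ q ≠ 1 := by
    have : (2:ℕ) ^ 1 ≤ 2 ^ q := Nat.pow_le_pow_right (by norm_num) hq.one_lt.le
    simpa using by omega
  have hfin : FiniteMultiplicity (2 ^ q) (n !) :=
    Nat.finiteMultiplicity_iff.2 ⟨hb1, n.factorial_pos⟩
  have hZm : padicValNat (2 ^ q) (n !) = multiplicity (2 ^ q) (n !) :=
    padicValNat_def' hb1 n.factorial_ne_zero
  have d1 : (2 ^ q) ^ (N - h) ∣ n ! := by
    rw [← hn]; exact pow_padicValNat_dvd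
  have d2 : ¬ (2 ^ q) ^ (N - h + 1) ∣ n ! := by
    apply hfin.multiplicity_lt_iff_not_dvd.mp
    rw [← hZm]
    exact hn ▸ Nat.lt_succ_self _
  set A := padicValNat 2 (n !) with hA
  have lower : q * (N - h) ≤ A := by
    apply (padicValNat_dvd_iff_le n.factorial_ne_zero).mp
    rwa [pow_mul]
  have upper : A < q * (N - h) + q := by
    by_contra hcon
    push_neg at hcon
    apply d2
    rw [← pow_mul]
    apply (padicValNat_dvd_iff_le n.factorial_ne_zero).mpr
    calc q * (N - h + 1) = q * (N - h) + q := by ring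
    _ ≤ A := hcon
  -- h ≤ N, so products add up
  have hhN : h ≤ N := by omega
  have H3 : q * (N - h) + q * h = q * N := by
    rw [← Nat.mul_add, Nat.sub_add_cancel hhN]
  have hqh : q ≤ q * h := Nat.le_mul_of_pos_right q h1
  -- A < q * N, hence n < 2 ^ k
  have v2_2k : padicValNat 2 ((2 ^ k)!) = q * N := by
    rw [v2_factorial, sum_digits_two_pow, hN]
  have hA_lt : A < q * N := by omega
  have hn_lt : n < 2 ^ k := by
    by_contra hcon
    push_neg at hcon
    have := v2_factorial_mono hcon
    rw [v2_2k] at this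
    omega
  -- hence A ≤ v2((2^k - 1)!) = q*N - k
  have hA_le : A ≤ q * N - k := by
    have hv : padicValNat 2 ((2 ^ k - 1)!) = q * N - k := by
      rw [v2_factorial, sum_digits_two_pow_sub_one, hN]
    exact hv ▸ v2_factorial_mono (show n ≤ 2 ^ k - 1 by omega)
  have H2 : A + k ≤ q * N := by omega
  -- final contradiction
  have H4 : q * h ≤ q * (q - 2) := Nat.mul_le_mul_left q (by omega)
  have H5 : q * (q - 2) + q = k := by
    rw [hk]
    have : q - 1 = (q - 2) + 1 := by omega
    rw [this, Nat.mul_add, Nat.mul_one]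
  linarith
end
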